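/- Let w ∈ C²([0,1]) satisfy -w'' + w^p = γ w on (0,1), w > 0 on (0,1), w(0) = w(1) = 0, with p > 1 and γ > 0. Then w is symmetric about x = 1/2, i.e., w(x) = w(1-x) for all x ∈ [0,1]. -/

import Mathlib

open Set
open Filter Topology


private lemma eqOn_Icc_of_eqOn_Ioo {f h : ℝ → ℝ}
    (hf : ContinuousOn f (Icc 0 1)) (hh : ContinuousOn h (Icc 0 1))
    (he : ∀ x ∈ Ioo (0:ℝ) 1, f x = h x) : ∀ x ∈ Icc (0:ℝ) 1, f x = h x := by
  intro x hx
  have hcl : x ∈ closure (Ioo (0:ℝ) 1) := by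
    rw [closure_Ioo (by norm_num : (0:ℝ) ≠ 1)]; exact hx
  have hne : (𝓝[Ioo (0:ℝ) 1] x).NeBot := mem_closure_iff_nhdsWithin_neBot.mp hcl
  have h1 : Tendsto f (𝓝[Ioo (0:ℝ) 1] x) (𝓝 (f x)) :=
    (hf x hx).mono_left (nhdsWithin_mono x Ioo_subset_Icc_self)
  have h2 : Tendsto h (𝓝[Ioo (0:ℝ) 1] x) (𝓝 (h x)) :=
    (hh x hx).mono_left (nhdsWithin_mono x Ioo_subset_Icc_self)
  have h3 : Tendsto f (𝓝[Ioo (0:ℝ) 1] x) (𝓝 (h x)) :=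
    h2.congr' (by filter_upwards [self_mem_nhdsWithin] with y hy using (he y hy).symm)
  exact tendsto_nhds_unique h1 h3

/-- Symmetry about x = 1/2 of positive solutions of the logistic equation
    -w'' + w^p = γ w on (0,1) with Dirichlet boundary conditions. -/
theorem stmt_0 (p γ : ℝ) (hp : 1 < p) (hγ : 0 < γ)
    (w : ℝ → ℝ) (hw : ContDiffOn ℝ 2 w (Icc 0 1))
    (heq : ∀ x ∈ Ioo (0:ℝ) 1, -(deriv (deriv w) x) + w x ^ p = γ * w x)
    (hpos : ∀ x ∈ Ioo (0:ℝ) 1, 0 < w x)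
    (hb0 : w 0 = 0) (hb1 : w 1 = 0) :
    ∀ x ∈ Icc (0:ℝ) 1, w x = w (1 - x) := by
  have hUD : UniqueDiffOn ℝ (Icc (0:ℝ) 1) := uniqueDiffOn_Icc one_pos
  set g : ℝ → ℝ := derivWithin w (Icc 0 1) with hgdef
  have hgC1 : ContDiffOn ℝ 1 g (Icc 0 1) := hw.derivWithin hUD (by norm_num)
  set g2 : ℝ → ℝ := derivWithin g (Icc 0 1) with hg2def
  have hwdiff : DifferentiableOn ℝ w (Icc 0 1) := hw.differentiableOn (by norm_num)
  have hgdiff : DifferentiableOn ℝ g (Icc 0 1) := hgC1.differentiableOn (by norm_num)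
  have hgcont : ContinuousOn g (Icc 0 1) := hgC1.continuousOn
  have hg2C0 : ContDiffOn ℝ 0 g2 (Icc 0 1) := hgC1.derivWithin hUD (by norm_num)
  have hg2cont : ContinuousOn g2 (Icc 0 1) := hg2C0.continuousOn
  have hw_nonneg : ∀ x ∈ Icc (0:ℝ) 1, 0 ≤ w x := by
    intro x hx
    rcases hx.1.eq_or_lt with h0 | h0
    · rw [← h0, hb0]
    rcases hx.2.eq_or_lt with h1 | h1
    · rw [h1, hb1]
    exact (hpos x ⟨h0, h1⟩).le
  -- identification of derivWithin with deriv on the interior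
  have hgx : ∀ x ∈ Ioo (0:ℝ) 1, g x = deriv w x := fun x hx =>
    derivWithin_of_mem_nhds (Icc_mem_nhds hx.1 hx.2)
  have hg2x : ∀ x ∈ Ioo (0:ℝ) 1, g2 x = deriv (deriv w) x := by
    intro x hx
    have h1 : g2 x = deriv g x := derivWithin_of_mem_nhds (Icc_mem_nhds hx.1 hx.2)
    rw [h1]
    apply Filter.EventuallyEq.deriv_eq
    filter_upwards [Ioo_mem_nhds hx.1 hx.2] with y hy using hgx y hy
  -- the equation for g2 on the closed interval
  have hkey : ∀ x ∈ Icc (0:ℝ) 1, g2 x = w x ^ p - γ * w x := by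
    apply eqOn_Icc_of_eqOn_Ioo hg2cont
    · exact (hw.continuousOn.rpow_const (fun x _ => Or.inr (by linarith))).sub
        (continuousOn_const.mul hw.continuousOn)
    · intro x hx
      have := heq x hx
      rw [hg2x x hx]
      linarith
  have hwD : ∀ x ∈ Icc (0:ℝ) 1, HasDerivWithinAt w (g x) (Icc 0 1) x :=
    fun x hx => (hwdiff x hx).hasDerivWithinAt
  have hgD : ∀ x ∈ Icc (0:ℝ) 1, HasDerivWithinAt g (g2 x) (Icc 0 1) x :=
    fun x hx => (hgdiff x hx).hasDerivWithinAt
  set Eg : ℝ → ℝ := fun x => g x ^ 2 / 2 - w x ^ (p+1) / (p+1) + γ * w x ^ 2 / 2 with hEgdef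
  have hp1 : (0:ℝ) < p + 1 := by linarith
  have hED : ∀ x ∈ Icc (0:ℝ) 1, HasDerivWithinAt Eg 0 (Icc 0 1) x := by
    intro x hx
    have h1 : HasDerivWithinAt (fun y => g y ^ 2 / 2) (g x * g2 x) (Icc 0 1) x := by
      have h := ((hgD x hx).pow 2).div_const 2
      refine h.congr_deriv ?_
      ring
    have h2 : HasDerivWithinAt (fun y => w y ^ (p+1) / (p+1)) (w x ^ p * g x) (Icc 0 1) x := by
      have h := ((hwD x hx).rpow_const (Or.inr (show (1:ℝ) ≤ p + 1 by linarith))).div_const (p+1)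
      refine h.congr_deriv ?_
      rw [show p + 1 - 1 = p by ring]
      field_simp
    have h3 : HasDerivWithinAt (fun y => γ * w y ^ 2 / 2) (γ * w x * g x) (Icc 0 1) x := by
      have h := (((hwD x hx).pow 2).const_mul γ).div_const 2
      refine h.congr_deriv ?_
      ring
    have h4 := (h1.sub h2).add h3
    refine h4.congr_deriv ?_
    rw [hkey x hx]
    ring
  have hconst := constant_of_has_deriv_right_zero
    (fun x hx => (hED x hx).continuousWithinAt)
    (fun x hx => (hED x (Ico_subset_Icc_self hx)).mono_of_mem_nhdsWithin
      (mem_nhdsWithin.mpr ⟨Iio 1, isOpen_Iio, hx.2,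
        fun y hy => ⟨le_trans hx.1 hy.2, le_of_lt hy.1⟩⟩))
  have hg1sq : g 1 ^ 2 = g 0 ^ 2 := by
    have h := hconst 1 (by norm_num)
    simp only [hEgdef, hb0, hb1, Real.zero_rpow hp1.ne'] at h
    norm_num at h
    linarith
  have hg0 : 0 ≤ g 0 := by
    have hD := hwD 0 (by norm_num : (0:ℝ) ∈ Icc 0 1)
    rw [hasDerivWithinAt_iff_tendsto_slope] at hD
    have hne : (𝓝[Icc (0:ℝ) 1 \ {0}] 0).NeBot := by
      apply mem_closure_iff_nhdsWithin_neBot.mp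
      apply closure_mono (show Ioc (0:ℝ) 1 ⊆ Icc 0 1 \ {0} from fun y hy =>
        ⟨Ioc_subset_Icc_self hy, fun h => hy.1.ne' (by simpa using h)⟩)
      rw [closure_Ioc (by norm_num : (0:ℝ) ≠ 1)]
      exact ⟨le_rfl, zero_le_one⟩
    refine ge_of_tendsto hD ?_
    filter_upwards [self_mem_nhdsWithin] with y hy
    have hy1 : y ∈ Icc (0:ℝ) 1 := hy.1
    have hy0 : y ≠ 0 := by simpa using hy.2
    have hypos : (0:ℝ) < y := hy1.1.lt_of_ne (Ne.symm hy0)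
    rw [slope_def_field, hb0]
    have := hw_nonneg y hy1
    apply div_nonneg <;> linarith
  have hg1 : g 1 ≤ 0 := by
    have hD := hwD 1 (by norm_num : (1:ℝ) ∈ Icc 0 1)
    rw [hasDerivWithinAt_iff_tendsto_slope] at hD
    have hne : (𝓝[Icc (0:ℝ) 1 \ {1}] 1).NeBot := by
      apply mem_closure_iff_nhdsWithin_neBot.mp
      apply closure_mono (show Ico (0:ℝ) 1 ⊆ Icc 0 1 \ {1} from fun y hy =>
        ⟨Ico_subset_Icc_self hy, fun h => hy.2.ne (by simpa using h)⟩)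
      rw [closure_Ico (by norm_num : (0:ℝ) ≠ 1)]
      exact ⟨zero_le_one, le_rfl⟩
    refine le_of_tendsto hD ?_
    filter_upwards [self_mem_nhdsWithin] with y hy
    have hy1 : y ∈ Icc (0:ℝ) 1 := hy.1
    have hy0 : y ≠ 1 := by simpa using hy.2
    have hylt : y < 1 := hy1.2.lt_of_ne hy0
    rw [slope_def_field, hb1]
    have := hw_nonneg y hy1
    apply div_nonpos_of_nonneg_of_nonpos <;> linarith
  have hg1neg : g 1 = - g 0 := by
    have habs : |g 1| = |g 0| := by
      rw [← Real.sqrt_sq_eq_abs, ← Real.sqrt_sq_eq_abs, hg1sq]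
    rw [abs_of_nonpos hg1, abs_of_nonneg hg0] at habs
    linarith
  obtain ⟨z, hz, hzmax⟩ := isCompact_Icc.exists_isMaxOn (nonempty_Icc.mpr zero_le_one)
    hw.continuousOn
  set M : ℝ := w z with hMdef
  have hM0 : 0 ≤ M := hw_nonneg z hz
  have hwM : ∀ x ∈ Icc (0:ℝ) 1, w x ∈ Icc 0 M := fun x hx => ⟨hw_nonneg x hx, hzmax hx⟩
  set C : ℝ := p * M ^ (p - 1) with hCdef
  have hC0 : 0 ≤ C := mul_nonneg (by linarith) (Real.rpow_nonneg hM0 _)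
  have hLip : ∀ u₁ ∈ Icc (0:ℝ) M, ∀ u₂ ∈ Icc (0:ℝ) M, |u₁ ^ p - u₂ ^ p| ≤ C * |u₁ - u₂| := by
    intro u₁ hu₁ u₂ hu₂
    have h := (convex_Icc (0:ℝ) M).norm_image_sub_le_of_norm_hasDerivWithin_le
      (f' := fun u => p * u ^ (p - 1))
      (fun u hu => (Real.hasDerivAt_rpow_const (Or.inr hp.le)).hasDerivWithinAt)
      (fun u hu => by
        rw [Real.norm_eq_abs, abs_of_nonneg (mul_nonneg (by linarith) (Real.rpow_nonneg hu.1 _))]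
        exact mul_le_mul_of_nonneg_left (Real.rpow_le_rpow hu.1 hu.2 (by linarith)) (by linarith))
      hu₂ hu₁
    simpa [Real.norm_eq_abs] using h
  set Kr : ℝ := max 1 (C + γ) with hKrdef
  have hKr1 : (1:ℝ) ≤ Kr := le_max_left _ _
  have hKrCγ : C + γ ≤ Kr := le_max_right _ _
  have hKr0 : (0:ℝ) ≤ Kr := by linarith
  set K : NNReal := Kr.toNNReal with hKdef
  have hKco : (K : ℝ) = Kr := Real.coe_toNNReal _ hKr0
  set v : ℝ → ℝ × ℝ → ℝ × ℝ := fun _ q => (q.2, q.1 ^ p - γ * q.1) with hvdef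
  set sv : ℝ → Set (ℝ × ℝ) := fun _ => Icc (0:ℝ) M ×ˢ (univ : Set ℝ) with hsvdef
  have hv : ∀ t, LipschitzOnWith K (v t) (sv t) := by
    intro t
    rw [lipschitzOnWith_iff_dist_le_mul]
    rintro ⟨u₁, v₁⟩ hq₁ ⟨u₂, v₂⟩ hq₂
    have hu₁ : u₁ ∈ Icc (0:ℝ) M := hq₁.1
    have hu₂ : u₂ ∈ Icc (0:ℝ) M := hq₂.1
    rw [hKco]
    simp only [hvdef, Prod.dist_eq, Real.dist_eq]
    apply max_le
    · calc |v₁ - v₂| ≤ max |u₁ - u₂| |v₁ - v₂| := le_max_right _ _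
        _ ≤ Kr * max |u₁ - u₂| |v₁ - v₂| :=
          le_mul_of_one_le_left (le_max_of_le_right (abs_nonneg _)) hKr1
    · have h1 : |u₁ ^ p - γ * u₁ - (u₂ ^ p - γ * u₂)| ≤ |u₁ ^ p - u₂ ^ p| + γ * |u₁ - u₂| := by
        have h2 : u₁ ^ p - γ * u₁ - (u₂ ^ p - γ * u₂) = (u₁ ^ p - u₂ ^ p) + (-γ) * (u₁ - u₂) := by
          ring
        rw [h2]
        calc |(u₁ ^ p - u₂ ^ p) + (-γ) * (u₁ - u₂)|
            ≤ |u₁ ^ p - u₂ ^ p| + |(-γ) * (u₁ - u₂)| := abs_add_le _ _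
          _ = |u₁ ^ p - u₂ ^ p| + γ * |u₁ - u₂| := by
              rw [abs_mul, abs_neg, abs_of_nonneg hγ.le]
      calc |u₁ ^ p - γ * u₁ - (u₂ ^ p - γ * u₂)| ≤ |u₁ ^ p - u₂ ^ p| + γ * |u₁ - u₂| := h1
        _ ≤ C * |u₁ - u₂| + γ * |u₁ - u₂| := by
            have := hLip u₁ hu₁ u₂ hu₂; linarith
        _ = (C + γ) * |u₁ - u₂| := by ring
        _ ≤ Kr * max |u₁ - u₂| |v₁ - v₂| :=
            mul_le_mul hKrCγ (le_max_left _ _) (abs_nonneg _) hKr0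
  set F : ℝ → ℝ × ℝ := fun x => (w x, g x) with hFdef
  set H : ℝ → ℝ × ℝ := fun x => (w (1 - x), -g (1 - x)) with hHdef
  have hmap : MapsTo (fun x : ℝ => 1 - x) (Icc 0 1) (Icc 0 1) := by
    intro x hx
    simp only [mem_Icc] at hx ⊢
    constructor <;> linarith
  have hsub : ContinuousOn (fun x : ℝ => 1 - x) (Icc (0:ℝ) 1) :=
    (continuous_const.sub continuous_id).continuousOn
  have hFc : ContinuousOn F (Icc 0 1) := hw.continuousOn.prodMk hgcont
  have hHc : ContinuousOn H (Icc 0 1) :=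
    (hw.continuousOn.comp hsub hmap).prodMk (hgcont.comp hsub hmap).neg
  have hIci : ∀ t ∈ Ico (0:ℝ) 1, Icc (0:ℝ) 1 ∈ 𝓝[Ici t] t := fun t ht =>
    mem_nhdsWithin.mpr ⟨Iio 1, isOpen_Iio, ht.2, fun y hy => ⟨le_trans ht.1 hy.2, le_of_lt hy.1⟩⟩
  have hF' : ∀ t ∈ Ico (0:ℝ) 1, HasDerivWithinAt F (v t (F t)) (Ici t) t := by
    intro t ht
    have htI : t ∈ Icc (0:ℝ) 1 := Ico_subset_Icc_self ht
    have h1 : HasDerivWithinAt F (g t, g2 t) (Icc 0 1) t := (hwD t htI).prodMk (hgD t htI)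
    have h2 := h1.mono_of_mem_nhdsWithin (hIci t ht)
    have h3 : v t (F t) = (g t, g2 t) := by
      simp only [hvdef, hFdef]
      rw [hkey t htI]
    rw [h3]; exact h2
  have hH' : ∀ t ∈ Ico (0:ℝ) 1, HasDerivWithinAt H (v t (H t)) (Ici t) t := by
    intro t ht
    have htI : t ∈ Icc (0:ℝ) 1 := Ico_subset_Icc_self ht
    have htI' : (1 - t) ∈ Icc (0:ℝ) 1 := hmap htI
    have hφ : HasDerivWithinAt (fun x : ℝ => 1 - x) (-1) (Icc (0:ℝ) 1) t :=
      ((hasDerivAt_id t).const_sub 1).hasDerivWithinAt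
    have h1 : HasDerivWithinAt (fun x => w (1 - x)) (g (1 - t) * (-1)) (Icc 0 1) t :=
      HasDerivWithinAt.comp t (hwD (1 - t) htI') hφ hmap
    have h2 : HasDerivWithinAt (fun x => -g (1 - x)) (-(g2 (1 - t) * (-1))) (Icc 0 1) t :=
      (HasDerivWithinAt.comp t (hgD (1 - t) htI') hφ hmap).neg
    have h3 : HasDerivWithinAt H (g (1 - t) * (-1), -(g2 (1 - t) * (-1))) (Icc 0 1) t :=
      h1.prodMk h2
    have h4 := h3.mono_of_mem_nhdsWithin (hIci t ht)
    have h5 : v t (H t) = (g (1 - t) * (-1), -(g2 (1 - t) * (-1))) := by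
      simp only [hvdef, hHdef]
      rw [hkey (1 - t) htI', Prod.mk.injEq]
      constructor <;> ring
    rw [h5]; exact h4
  have hFs : ∀ t ∈ Ico (0:ℝ) 1, F t ∈ sv t := fun t ht =>
    Set.mem_prod.mpr ⟨hwM t (Ico_subset_Icc_self ht), mem_univ _⟩
  have hHs : ∀ t ∈ Ico (0:ℝ) 1, H t ∈ sv t := fun t ht =>
    Set.mem_prod.mpr ⟨hwM (1 - t) (hmap (Ico_subset_Icc_self ht)), mem_univ _⟩
  have ha : F 0 = H 0 := by
    have h10 : (1:ℝ) - 0 = 1 := by norm_num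
    simp only [hFdef, hHdef, h10, hb0, hb1, hg1neg, neg_neg]
  have hfinal := ODE_solution_unique_of_mem_Icc_right (fun t _ => hv t) hFc hF' hFs hHc hH' hHs ha
  intro x hx
  exact congrArg Prod.fst (hfinal hx)
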